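/- arXiv:1407.0773 — 4 statements merged into one kernel-verified Lean document; each statement's English description precedes it below -/
import Mathlib

section
/- Let H > 0 and ε > 0, let {M,…,N} be a finite range of mode indices, and let γ : (0,∞) × [−H,0] → ℝ be continuous. For each index j let φ_j : (0,∞) × [−H,0] → ℝ be continuous and differentiable in its first argument with continuous partial derivative φ_{jR}; assume the orthonormality relations ∫_{−H}^{0} γ(R,z) φ_j(R,z) φ_l(R,z) dz = δ_{jl} hold for all R > 0 and all indices j, l, and define C_{jl}(R) = ∫_{−H}^{0} γ(R,z) φ_{jR}(R,z) φ_l(R,z) dz. Let k_j, θ_j : (0,∞) → ℝ be differentiable with θ_j'(R) = k_j(R), and let A_j : (0,∞) → ℂ be differentiable. Define P(r,z) = Σ_{j=M}^{N} A_j(εr) φ_j(εr, z) e^{i θ_j(εr)/ε}. Then for every r > 0 one has the exact identity ∫_{−H}^{0} γ(εr,z) Im( P_r(r,z) · conj(P(r,z)) ) dz = Σ_{l=M}^{N} k_l(εr) |A_l(εr)|² + ε Σ_{l=M}^{N} Σ_{j=M}^{N} C_{lj}(εr) Im( A_l(εr) conj(A_j(εr)) e^{i(θ_l(εr)−θ_j(εr))/ε}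 ) + ε Σ_{l=M}^{N} Im( A_l'(εr) conj(A_l(εr)) ). -/
open Set Finset

set_option maxHeartbeats 4000000 in
/-- **Exact expansion of the depth-integrated radial energy flux of the WKB modal
ansatz.**  With orthonormal local modes `φ_j`, coupling coefficients
`C_{jl}(R) = ∫ γ φ_{jR} φ_l dz`, phases satisfying `θ_j' = k_j`, and
`P(r,z) = ∑_j A_j(εr) φ_j(εr,z) e^{iθ_j(εr)/ε}`, one has, exactly,
`∫_{−H}^0 γ Im(P_r conj P) dz = ∑_l k_l |A_l|² + ε ∑_{l,j} C_{lj} Im(A_l conj(A_j)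
e^{i(θ_l−θ_j)/ε}) + ε ∑_l Im(A_l' conj(A_l))`, all slow-variable functions being
evaluated at `R = εr`. -/
theorem flux_of_modal_ansatz
    (H ε : ℝ) (hH : 0 < H) (hε : 0 < ε) (M N : ℤ)
    (γ : ℝ → ℝ → ℝ)
    (hγ : ContinuousOn (fun p : ℝ × ℝ => γ p.1 p.2) (Set.Ioi 0 ×ˢ Set.Icc (-H) 0))
    (φ φR : ℤ → ℝ → ℝ → ℝ)
    (hφcont : ∀ j ∈ Finset.Icc M N,
      ContinuousOn (fun p : ℝ × ℝ => φ j p.1 p.2) (Set.Ioi 0 ×ˢ Set.Icc (-H) 0))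
    (hφR : ∀ j ∈ Finset.Icc M N, ∀ R ∈ Set.Ioi (0:ℝ), ∀ z ∈ Set.Icc (-H) 0,
      HasDerivAt (fun s => φ j s z) (φR j R z) R)
    (hφRcont : ∀ j ∈ Finset.Icc M N,
      ContinuousOn (fun p : ℝ × ℝ => φR j p.1 p.2) (Set.Ioi 0 ×ˢ Set.Icc (-H) 0))
    (hortho : ∀ j ∈ Finset.Icc M N, ∀ l ∈ Finset.Icc M N, ∀ R ∈ Set.Ioi (0:ℝ),
      (∫ z in (-H)..0, γ R z * φ j R z * φ l R z) = if j = l then 1 else 0)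
    (C : ℤ → ℤ → ℝ → ℝ)
    (hC : ∀ j ∈ Finset.Icc M N, ∀ l ∈ Finset.Icc M N, ∀ R ∈ Set.Ioi (0:ℝ),
      C j l R = ∫ z in (-H)..0, γ R z * φR j R z * φ l R z)
    (k θ : ℤ → ℝ → ℝ) (A : ℤ → ℝ → ℂ)
    (hk : ∀ j ∈ Finset.Icc M N, ∀ R ∈ Set.Ioi (0:ℝ), DifferentiableAt ℝ (k j) R)
    (hθ : ∀ j ∈ Finset.Icc M N, ∀ R ∈ Set.Ioi (0:ℝ), HasDerivAt (θ j) (k j R) R)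
    (hA : ∀ j ∈ Finset.Icc M N, ∀ R ∈ Set.Ioi (0:ℝ), DifferentiableAt ℝ (A j) R)
    (P : ℝ → ℝ → ℂ)
    (hP : ∀ r z, P r z = ∑ j ∈ Finset.Icc M N,
      A j (ε * r) * (φ j (ε * r) z : ℂ)
        * Complex.exp (Complex.I * (θ j (ε * r) : ℂ) / (ε : ℂ))) :
    ∀ r ∈ Set.Ioi (0:ℝ),
      (∫ z in (-H)..0,
          γ (ε * r) z * (deriv (fun s => P s z) r * (starRingEnd ℂ) (P r z)).im)
      = (∑ l ∈ Finset.Icc M N, k l (ε * r) * ‖A l (ε * r)‖ ^ 2)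
        + ε * ∑ l ∈ Finset.Icc M N, ∑ j ∈ Finset.Icc M N,
            C l j (ε * r) * (A l (ε * r) * (starRingEnd ℂ) (A j (ε * r))
              * Complex.exp (Complex.I * ((θ l (ε * r) : ℂ) - (θ j (ε * r) : ℂ)) / (ε : ℂ))).im
        + ε * ∑ l ∈ Finset.Icc M N,
            (deriv (A l) (ε * r) * (starRingEnd ℂ) (A l (ε * r))).im := by
  intro r hr
  have hrR : ε * r ∈ Set.Ioi (0:ℝ) := mul_pos hε (mem_Ioi.mp hr)
  have hεne : (ε : ℂ) ≠ 0 := Complex.ofReal_ne_zero.mpr (ne_of_gt hε)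
  set e : ℤ → ℂ := fun j => Complex.exp (Complex.I * (θ j (ε * r) : ℂ) / (ε : ℂ)) with he
  -- exponential identities
  have hee : ∀ j l : ℤ, e j * (starRingEnd ℂ) (e l)
      = Complex.exp (Complex.I * ((θ j (ε * r) : ℂ) - (θ l (ε * r) : ℂ)) / (ε : ℂ)) := by
    intro j l
    rw [he]
    simp only []
    rw [← Complex.exp_conj, ← Complex.exp_add]
    congr 1
    simp only [map_div₀, map_mul, Complex.conj_I, Complex.conj_ofReal]
    ring
  have hee1 : ∀ l : ℤ, e l * (starRingEnd ℂ) (e l) = 1 := by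
    intro l
    rw [hee l l]
    simp
  clear_value e
  set c : ℤ → ℤ → ℂ := fun j l =>
    ((ε : ℂ) * deriv (A j) (ε * r) + Complex.I * (k j (ε * r) : ℂ) * A j (ε * r))
      * (starRingEnd ℂ) (A l (ε * r)) * (e j * (starRingEnd ℂ) (e l)) with hc
  set d : ℤ → ℤ → ℂ := fun j l =>
    (ε : ℂ) * A j (ε * r) * (starRingEnd ℂ) (A l (ε * r)) * (e j * (starRingEnd ℂ) (e l)) with hd
  clear_value c d
  -- derivative of P in r
  have hεs : HasDerivAt (fun s : ℝ => ε * s) ε r := by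
    simpa using (hasDerivAt_id r).const_mul ε
  have hD : ∀ z ∈ Set.Icc (-H) 0, HasDerivAt (fun s => P s z)
      (∑ j ∈ Finset.Icc M N,
        ((ε : ℂ) * deriv (A j) (ε * r) * (φ j (ε * r) z : ℂ)
          + (ε : ℂ) * A j (ε * r) * (φR j (ε * r) z : ℂ)
          + Complex.I * (k j (ε * r) : ℂ) * A j (ε * r) * (φ j (ε * r) z : ℂ)) * e j) r := by
    intro z hz
    have h1 : (fun s => P s z) = fun s => ∑ j ∈ Finset.Icc M N,
        A j (ε * s) * (φ j (ε * s) z : ℂ)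
          * Complex.exp (Complex.I * (θ j (ε * s) : ℂ) / (ε : ℂ)) := by
      funext s; exact hP s z
    rw [h1]
    apply HasDerivAt.fun_sum
    intro j hj
    have hAj : HasDerivAt (fun s => A j (ε * s)) ((ε : ℂ) * deriv (A j) (ε * r)) r := by
      have h2 := HasDerivAt.scomp r ((hA j hj (ε * r) hrR).hasDerivAt) hεs
      simpa [Function.comp_def, Complex.real_smul] using h2
    have hφj : HasDerivAt (fun s => ((φ j (ε * s) z : ℝ) : ℂ))
        ((ε * φR j (ε * r) z : ℝ) : ℂ) r := by
      have h0 : HasDerivAt (fun s => φ j (ε * s) z) (ε * φR j (ε * r) z) r := by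
        have h2 := HasDerivAt.comp r (hφR j hj (ε * r) hrR z hz) hεs
        simpa [Function.comp_def, mul_comm] using h2
      exact h0.ofReal_comp
    have hExpj : HasDerivAt
        (fun s => Complex.exp (Complex.I * (θ j (ε * s) : ℂ) / (ε : ℂ)))
        (Complex.exp (Complex.I * (θ j (ε * r) : ℂ) / (ε : ℂ))
          * (Complex.I * ((k j (ε * r) * ε : ℝ) : ℂ) / (ε : ℂ))) r := by
      have hθ1 : HasDerivAt (fun s => θ j (ε * s)) (k j (ε * r) * ε) r := by
        have h2 := HasDerivAt.comp r (hθ j hj (ε * r) hrR) hεs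
        simpa [Function.comp_def, mul_comm] using h2
      have hθ3 : HasDerivAt (fun s => Complex.I * ((θ j (ε * s) : ℝ) : ℂ) / (ε : ℂ))
          (Complex.I * ((k j (ε * r) * ε : ℝ) : ℂ) / (ε : ℂ)) r :=
        (hθ1.ofReal_comp.const_mul Complex.I).div_const (ε : ℂ)
      exact hθ3.cexp
    have hprod := (hAj.fun_mul hφj).fun_mul hExpj
    refine hprod.congr_deriv ?_
    rw [he]
    push_cast
    field_simp
  -- conjugate of P
  have hPc : ∀ z, (starRingEnd ℂ) (P r z) = ∑ l ∈ Finset.Icc M N,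
      (starRingEnd ℂ) (A l (ε * r)) * (φ l (ε * r) z : ℂ) * (starRingEnd ℂ) (e l) := by
    intro z
    rw [hP, map_sum]
    refine Finset.sum_congr rfl fun l _ => ?_
    rw [he]
    simp [Complex.conj_ofReal]
  -- pointwise identity for the integrand
  have key : ∀ z ∈ Set.Icc (-H) 0,
      γ (ε * r) z * (deriv (fun s => P s z) r * (starRingEnd ℂ) (P r z)).im
      = ∑ j ∈ Finset.Icc M N, ∑ l ∈ Finset.Icc M N,
          (γ (ε * r) z * φ j (ε * r) z * φ l (ε * r) z * (c j l).im
            + γ (ε * r) z * φR j (ε * r) z * φ l (ε * r) z * (d j l).im) := by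
    intro z hz
    rw [(hD z hz).deriv, hPc z, Finset.sum_mul_sum]
    rw [Complex.im_sum, Finset.mul_sum]
    refine Finset.sum_congr rfl fun j _ => ?_
    rw [Complex.im_sum, Finset.mul_sum]
    refine Finset.sum_congr rfl fun l _ => ?_
    have hprod : ((ε : ℂ) * deriv (A j) (ε * r) * (φ j (ε * r) z : ℂ)
          + (ε : ℂ) * A j (ε * r) * (φR j (ε * r) z : ℂ)
          + Complex.I * (k j (ε * r) : ℂ) * A j (ε * r) * (φ j (ε * r) z : ℂ)) * e j
        * ((starRingEnd ℂ) (A l (ε * r)) * (φ l (ε * r) z : ℂ) * (starRingEnd ℂ) (e l))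
        = ((φ j (ε * r) z * φ l (ε * r) z : ℝ) : ℂ) * c j l
          + ((φR j (ε * r) z * φ l (ε * r) z : ℝ) : ℂ) * d j l := by
      rw [hc, hd]
      push_cast
      ring
    rw [hprod, Complex.add_im, Complex.im_ofReal_mul, Complex.im_ofReal_mul]
    ring
  -- continuity facts
  have hmapz : Set.MapsTo (fun z : ℝ => ((ε * r, z) : ℝ × ℝ)) (Set.Icc (-H) 0)
      (Set.Ioi 0 ×ˢ Set.Icc (-H) 0) := fun z hz => ⟨hrR, hz⟩
  have hcomp : ContinuousOn (fun z : ℝ => ((ε * r, z) : ℝ × ℝ)) (Set.Icc (-H) 0) :=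
    (continuous_const.prodMk continuous_id).continuousOn
  have hγc : ContinuousOn (fun z => γ (ε * r) z) (Set.Icc (-H) 0) :=
    hγ.comp hcomp hmapz
  have hφc : ∀ j ∈ Finset.Icc M N,
      ContinuousOn (fun z => φ j (ε * r) z) (Set.Icc (-H) 0) :=
    fun j hj => (hφcont j hj).comp hcomp hmapz
  have hφRc : ∀ j ∈ Finset.Icc M N,
      ContinuousOn (fun z => φR j (ε * r) z) (Set.Icc (-H) 0) :=
    fun j hj => (hφRcont j hj).comp hcomp hmapz
  have huIcc : Set.uIcc (-H) 0 = Set.Icc (-H) 0 := Set.uIcc_of_le (by linarith)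
  have hInt1 : ∀ j ∈ Finset.Icc M N, ∀ l ∈ Finset.Icc M N, IntervalIntegrable
      (fun z => γ (ε * r) z * φ j (ε * r) z * φ l (ε * r) z) MeasureTheory.volume (-H) 0 := by
    intro j hj l hl
    apply ContinuousOn.intervalIntegrable
    rw [huIcc]
    exact (hγc.mul (hφc j hj)).mul (hφc l hl)
  have hInt2 : ∀ j ∈ Finset.Icc M N, ∀ l ∈ Finset.Icc M N, IntervalIntegrable
      (fun z => γ (ε * r) z * φR j (ε * r) z * φ l (ε * r) z) MeasureTheory.volume (-H) 0 := by
    intro j hj l hl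
    apply ContinuousOn.intervalIntegrable
    rw [huIcc]
    exact (hγc.mul (hφRc j hj)).mul (hφc l hl)
  -- compute the integral
  have step1 : (∫ z in (-H)..0,
        γ (ε * r) z * (deriv (fun s => P s z) r * (starRingEnd ℂ) (P r z)).im)
      = ∫ z in (-H)..0, ∑ j ∈ Finset.Icc M N, ∑ l ∈ Finset.Icc M N,
          (γ (ε * r) z * φ j (ε * r) z * φ l (ε * r) z * (c j l).im
            + γ (ε * r) z * φR j (ε * r) z * φ l (ε * r) z * (d j l).im) :=
    intervalIntegral.integral_congr (fun z hz => key z (huIcc ▸ hz))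
  have hIntInner : ∀ j ∈ Finset.Icc M N, ∀ l ∈ Finset.Icc M N, IntervalIntegrable
      (fun z => γ (ε * r) z * φ j (ε * r) z * φ l (ε * r) z * (c j l).im
        + γ (ε * r) z * φR j (ε * r) z * φ l (ε * r) z * (d j l).im)
      MeasureTheory.volume (-H) 0 :=
    fun j hj l hl => ((hInt1 j hj l hl).mul_const _).add ((hInt2 j hj l hl).mul_const _)
  have hIntSum : ∀ j ∈ Finset.Icc M N, IntervalIntegrable
      (fun z => ∑ l ∈ Finset.Icc M N,
        (γ (ε * r) z * φ j (ε * r) z * φ l (ε * r) z * (c j l).im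
          + γ (ε * r) z * φR j (ε * r) z * φ l (ε * r) z * (d j l).im))
      MeasureTheory.volume (-H) 0 := by
    intro j hj
    have h2 := IntervalIntegrable.sum (μ := MeasureTheory.volume) (a := -H) (b := (0:ℝ))
      (Finset.Icc M N)
      (f := fun l z => γ (ε * r) z * φ j (ε * r) z * φ l (ε * r) z * (c j l).im
        + γ (ε * r) z * φR j (ε * r) z * φ l (ε * r) z * (d j l).im)
      (fun l hl => hIntInner j hj l hl)
    refine Eq.mpr (congrArg (fun f => IntervalIntegrable f MeasureTheory.volume (-H) 0) ?_) h2
    funext z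
    exact (Finset.sum_apply z (Finset.Icc M N)
      (fun l (z : ℝ) => γ (ε * r) z * φ j (ε * r) z * φ l (ε * r) z * (c j l).im
        + γ (ε * r) z * φR j (ε * r) z * φ l (ε * r) z * (d j l).im)).symm
  have step2a : (∫ z in (-H)..0, ∑ j ∈ Finset.Icc M N, ∑ l ∈ Finset.Icc M N,
          (γ (ε * r) z * φ j (ε * r) z * φ l (ε * r) z * (c j l).im
            + γ (ε * r) z * φR j (ε * r) z * φ l (ε * r) z * (d j l).im))
      = ∑ j ∈ Finset.Icc M N, ∫ z in (-H)..0, ∑ l ∈ Finset.Icc M N,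
          (γ (ε * r) z * φ j (ε * r) z * φ l (ε * r) z * (c j l).im
            + γ (ε * r) z * φR j (ε * r) z * φ l (ε * r) z * (d j l).im) :=
    intervalIntegral.integral_finset_sum
      (f := fun j z => ∑ l ∈ Finset.Icc M N,
        (γ (ε * r) z * φ j (ε * r) z * φ l (ε * r) z * (c j l).im
          + γ (ε * r) z * φR j (ε * r) z * φ l (ε * r) z * (d j l).im))
      (fun j hj => hIntSum j hj)
  have step2b : ∀ j ∈ Finset.Icc M N,
      (∫ z in (-H)..0, ∑ l ∈ Finset.Icc M N,
          (γ (ε * r) z * φ j (ε * r) z * φ l (ε * r) z * (c j l).im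
            + γ (ε * r) z * φR j (ε * r) z * φ l (ε * r) z * (d j l).im))
      = ∑ l ∈ Finset.Icc M N, ∫ z in (-H)..0,
          (γ (ε * r) z * φ j (ε * r) z * φ l (ε * r) z * (c j l).im
            + γ (ε * r) z * φR j (ε * r) z * φ l (ε * r) z * (d j l).im) :=
    fun j hj => intervalIntegral.integral_finset_sum
      (f := fun l z => γ (ε * r) z * φ j (ε * r) z * φ l (ε * r) z * (c j l).im
        + γ (ε * r) z * φR j (ε * r) z * φ l (ε * r) z * (d j l).im)
      (fun l hl => hIntInner j hj l hl)
  have step2 : (∫ z in (-H)..0, ∑ j ∈ Finset.Icc M N, ∑ l ∈ Finset.Icc M N,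
          (γ (ε * r) z * φ j (ε * r) z * φ l (ε * r) z * (c j l).im
            + γ (ε * r) z * φR j (ε * r) z * φ l (ε * r) z * (d j l).im))
      = ∑ j ∈ Finset.Icc M N, ∑ l ∈ Finset.Icc M N,
          ((if j = l then (1:ℝ) else 0) * (c j l).im + C j l (ε * r) * (d j l).im) := by
    rw [step2a]
    refine Finset.sum_congr rfl fun j hj => ?_
    rw [step2b j hj]
    refine Finset.sum_congr rfl fun l hl => ?_
    rw [intervalIntegral.integral_add ((hInt1 j hj l hl).mul_const _)
        ((hInt2 j hj l hl).mul_const _),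
      intervalIntegral.integral_mul_const, intervalIntegral.integral_mul_const,
      hortho j hj l hl (ε * r) hrR, ← hC j hj l hl (ε * r) hrR]
  rw [step1, step2]
  simp only [Finset.sum_add_distrib]
  -- diagonal term
  have hdiag : ∑ j ∈ Finset.Icc M N, ∑ l ∈ Finset.Icc M N,
      (if j = l then (1:ℝ) else 0) * (c j l).im
      = (∑ l ∈ Finset.Icc M N, k l (ε * r) * ‖A l (ε * r)‖ ^ 2)
        + ε * ∑ l ∈ Finset.Icc M N,
            (deriv (A l) (ε * r) * (starRingEnd ℂ) (A l (ε * r))).im := by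
    rw [Finset.mul_sum, ← Finset.sum_add_distrib]
    refine Finset.sum_congr rfl fun j hj => ?_
    have hite : ∀ l ∈ Finset.Icc M N,
        (if j = l then (1:ℝ) else 0) * (c j l).im = if j = l then (c j l).im else 0 := by
      intro l _; split <;> simp
    rw [Finset.sum_congr rfl hite, Finset.sum_ite_eq, if_pos hj]
    have h1 : c j j = (ε : ℂ) * (deriv (A j) (ε * r) * (starRingEnd ℂ) (A j (ε * r)))
        + Complex.I * (k j (ε * r) : ℂ)
          * ((Complex.normSq (A j (ε * r)) : ℝ) : ℂ) := by
      rw [hc]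
      simp only []
      rw [hee1, mul_one, ← Complex.mul_conj]
      ring
    rw [h1, Complex.add_im, Complex.im_ofReal_mul]
    simp [Complex.sq_norm]
    ring
  -- coupling term
  have hcoup : ∑ j ∈ Finset.Icc M N, ∑ l ∈ Finset.Icc M N, C j l (ε * r) * (d j l).im
      = ε * ∑ l ∈ Finset.Icc M N, ∑ j ∈ Finset.Icc M N,
          C l j (ε * r) * (A l (ε * r) * (starRingEnd ℂ) (A j (ε * r))
            * Complex.exp (Complex.I * ((θ l (ε * r) : ℂ) - (θ j (ε * r) : ℂ)) / (ε : ℂ))).im := by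
    rw [Finset.mul_sum]
    refine Finset.sum_congr rfl fun j _ => ?_
    rw [Finset.mul_sum]
    refine Finset.sum_congr rfl fun l _ => ?_
    have h1 : d j l = (ε : ℂ) * (A j (ε * r) * (starRingEnd ℂ) (A l (ε * r))
        * Complex.exp (Complex.I * ((θ j (ε * r) : ℂ) - (θ l (ε * r) : ℂ)) / (ε : ℂ))) := by
      rw [hd]
      simp only []
      rw [hee]
      ring
    rw [h1, Complex.im_ofReal_mul]
    ring
  rw [hdiag, hcoup, add_right_comm]
end

section
/- Fix an integer range {M,…,N} of mode indices and a parameter ε > 0; for each index l let k_l : (0,∞) → ℝ be differentiable with k_l(R) > 0, let θ_l : (0,∞) → ℝ be any function, let A_l : (0,∞) → ℂ be differentiable, and for each pair l, j let α_{lj} : (0,∞) → ℂ be any function. If the family (A_l) satisfies the coupled-mode system (MPE) with coefficients α_{lj}, then for every R > 0: Σ_{l=M}^{N} [ (d/dR)( k_l(R) |A_l(R)|² ) + (1/R) k_l(R) |A_l(R)|² ] + Σ_{l=M}^{N} Σ_{j=M}^{N} Im( α_{lj}(R) A_j(R) conj(A_l(R)) e^{i(θ_j(R)−θ_l(R))/ε}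 ) = 0. -/
open Finset

/-- **Energy identity for the coupled-mode system (MPE).**  If the amplitudes `A_l`
satisfy `2i k_l A_l' + i k_l' A_l + (i/R) k_l A_l +
∑_j α_{lj} A_j e^{i(θ_j−θ_l)/ε} = 0` for `l ∈ {M,…,N}` and `R > 0`, then
`∑_l [ (k_l |A_l|²)' + (1/R) k_l |A_l|² ]
  + ∑_{l,j} Im( α_{lj} A_j conj(A_l) e^{i(θ_j−θ_l)/ε} ) = 0` for every `R > 0`. -/
theorem MPE_energy_identity
    (ε : ℝ) (hε : 0 < ε) (M N : ℤ)
    (k θ : ℤ → ℝ → ℝ) (A : ℤ → ℝ → ℂ) (α : ℤ → ℤ → ℝ → ℂ)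
    (hk : ∀ l ∈ Finset.Icc M N, ∀ R ∈ Set.Ioi (0:ℝ), DifferentiableAt ℝ (k l) R)
    (hkpos : ∀ l ∈ Finset.Icc M N, ∀ R ∈ Set.Ioi (0:ℝ), 0 < k l R)
    (hA : ∀ l ∈ Finset.Icc M N, ∀ R ∈ Set.Ioi (0:ℝ), DifferentiableAt ℝ (A l) R)
    (hMPE : ∀ l ∈ Finset.Icc M N, ∀ R ∈ Set.Ioi (0:ℝ),
      2 * Complex.I * (k l R : ℂ) * deriv (A l) R
        + Complex.I * ((deriv (k l) R : ℝ) : ℂ) * A l R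
        + Complex.I / (R : ℂ) * (k l R : ℂ) * A l R
        + ∑ j ∈ Finset.Icc M N, α l j R * A j R
            * Complex.exp (Complex.I * ((θ j R : ℂ) - (θ l R : ℂ)) / (ε : ℂ)) = 0) :
    ∀ R ∈ Set.Ioi (0:ℝ),
      (∑ l ∈ Finset.Icc M N,
        (deriv (fun s => k l s * ‖A l s‖ ^ 2) R
          + (1 / R) * k l R * ‖A l R‖ ^ 2))
      + ∑ l ∈ Finset.Icc M N, ∑ j ∈ Finset.Icc M N,
          (α l j R * A j R * (starRingEnd ℂ) (A l R)
            * Complex.exp (Complex.I * ((θ j R : ℂ) - (θ l R : ℂ)) / (ε : ℂ))).im = 0 := by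
  intro R hR
  have hR0 : (0:ℝ) < R := hR
  have hRne : (R:ℝ) ≠ 0 := ne_of_gt hR0
  rw [← Finset.sum_add_distrib]
  apply Finset.sum_eq_zero
  intro l hl
  -- abbreviations
  set a := A l R with ha
  set a' := deriv (A l) R with ha'
  set κ := k l R with hκ
  set κ' := deriv (k l) R with hκ'
  -- derivative of k * |A|^2
  have hAd : HasDerivAt (A l) a' R := (hA l hl R hR).hasDerivAt
  have hkd : HasDerivAt (k l) κ' R := (hk l hl R hR).hasDerivAt
  have hconj : HasDerivAt (fun s => (starRingEnd ℂ) (A l s)) ((starRingEnd ℂ) a') R := hAd.star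
  have hmul : HasDerivAt (fun s => A l s * (starRingEnd ℂ) (A l s))
      (a' * (starRingEnd ℂ) a + a * (starRingEnd ℂ) a') R := hAd.mul hconj
  have hre : HasDerivAt (fun s => (A l s * (starRingEnd ℂ) (A l s)).re)
      ((a' * (starRingEnd ℂ) a + a * (starRingEnd ℂ) a').re) R :=
    Complex.reCLM.hasFDerivAt.comp_hasDerivAt R hmul
  have hfun : (fun s => k l s * ‖A l s‖ ^ 2)
      = fun s => k l s * (A l s * (starRingEnd ℂ) (A l s)).re := by
    funext s
    rw [Complex.mul_conj]
    simp [Complex.sq_norm, Complex.normSq_apply]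
  have hprod : HasDerivAt (fun s => k l s * ‖A l s‖ ^ 2)
      (κ' * (a * (starRingEnd ℂ) a).re
        + κ * (a' * (starRingEnd ℂ) a + a * (starRingEnd ℂ) a').re) R := by
    rw [hfun]
    exact hkd.mul hre
  have hderiv : deriv (fun s => k l s * ‖A l s‖ ^ 2) R
      = κ' * (a * (starRingEnd ℂ) a).re
        + κ * (a' * (starRingEnd ℂ) a + a * (starRingEnd ℂ) a').re := hprod.deriv
  -- from MPE
  have h := hMPE l hl R hR
  have him : ((2 * Complex.I * (κ:ℂ) * a' + Complex.I * (κ':ℂ) * a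
      + Complex.I / (R:ℂ) * (κ:ℂ) * a
      + ∑ j ∈ Finset.Icc M N, α l j R * A j R
          * Complex.exp (Complex.I * ((θ j R : ℂ) - (θ l R : ℂ)) / (ε : ℂ)))
      * (starRingEnd ℂ) a).im = 0 := by
    rw [h, zero_mul]; simp
  have hsum : (∑ j ∈ Finset.Icc M N, α l j R * A j R
        * Complex.exp (Complex.I * ((θ j R : ℂ) - (θ l R : ℂ)) / (ε : ℂ)))
        * (starRingEnd ℂ) a
      = ∑ j ∈ Finset.Icc M N, α l j R * A j R * (starRingEnd ℂ) a
        * Complex.exp (Complex.I * ((θ j R : ℂ) - (θ l R : ℂ)) / (ε : ℂ)) := by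
    rw [Finset.sum_mul]
    exact Finset.sum_congr rfl fun j _ => by ring
  rw [add_mul, add_mul, add_mul, Complex.add_im, Complex.add_im, Complex.add_im,
    hsum, Complex.im_sum] at him
  have hdiv : Complex.I / (R:ℂ) = ((R⁻¹ : ℝ) : ℂ) * Complex.I := by
    push_cast
    field_simp
  rw [hdiv] at him
  rw [hderiv]
  have habs : ‖a‖ ^ 2 = a.re * a.re + a.im * a.im := by
    rw [Complex.sq_norm, Complex.normSq_apply]
  rw [habs]
  simp only [Complex.mul_im, Complex.mul_re, Complex.add_re, Complex.add_im,
    Complex.I_re, Complex.I_im, Complex.ofReal_re, Complex.ofReal_im,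
    Complex.conj_re, Complex.conj_im, Complex.re_ofNat, Complex.im_ofNat] at him ⊢
  field_simp at him ⊢
  linarith [him]
end

section
/- Fix an integer range {M,…,N} of mode indices and a parameter ε > 0; for each index l let k_l : (0,∞) → ℝ be differentiable with k_l(R) > 0, let θ_l : (0,∞) → ℝ be any function, let A_l : (0,∞) → ℂ be differentiable, and for each pair l, j let C_{lj} : (0,∞) → ℝ and m_{lj} : (0,∞) → ℝ be functions with m_{lj}(R) = m_{jl}(R) for all R. Suppose the family (A_l) satisfies the coupled-mode system (MPE) with the coefficients α_{lj}(R) = m_{lj}(R) − i k_j(R) ( C_{lj}(R) − C_{jl}(R) ). Then for every R > 0: Σ_{l=M}^{N} [ (d/dR)( k_l(R) |A_l(R)|² ) + (1/R) k_l(R) |A_l(R)|² ] + Σ_{l=M}^{N} Σ_{j=M}^{N} ( k_l(R) − k_j(R) ) C_{lj}(R) · Re( A_j(R) conj(A_l(R)) e^{i(θ_j(R)−θ_l(R))/ε} ) = 0. -/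
open Finset

/-- Auxiliary quantity. -/
noncomputable def Zc (ε : ℝ) (θ : ℤ → ℝ → ℝ) (A : ℤ → ℝ → ℂ) (R : ℝ) (l j : ℤ) : ℂ :=
  A j R * (starRingEnd ℂ) (A l R)
    * Complex.exp (Complex.I * ((θ j R : ℂ) - (θ l R : ℂ)) / (ε : ℂ))

lemma Zc_symm (ε : ℝ) (θ : ℤ → ℝ → ℝ) (A : ℤ → ℝ → ℂ) (R : ℝ) (l j : ℤ) :
    Zc ε θ A R j l = (starRingEnd ℂ) (Zc ε θ A R l j) := by
  unfold Zc
  rw [map_mul, map_mul, ← Complex.exp_conj]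
  have : (starRingEnd ℂ) (Complex.I * ((θ j R : ℂ) - (θ l R : ℂ)) / (ε : ℂ))
      = Complex.I * ((θ l R : ℂ) - (θ j R : ℂ)) / (ε : ℂ) := by
    rw [map_div₀, map_mul, map_sub]
    simp [Complex.conj_I, Complex.conj_ofReal]
    ring
  rw [this, Complex.conj_conj]
  ring

/-- **Energy identity for the coupled-mode system with lossless coefficients.**
If the amplitudes `A_l` satisfy the coupled-mode system (MPE) with coefficients
`α_{lj} = m_{lj} − i k_j (C_{lj} − C_{jl})`, where the `m_{lj}` are real and
symmetric, then for every `R > 0`,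
`∑_l [ (k_l |A_l|²)' + (1/R) k_l |A_l|² ]
  + ∑_{l,j} (k_l − k_j) C_{lj} Re( A_j conj(A_l) e^{i(θ_j−θ_l)/ε} ) = 0`. -/
theorem MPE_energy_identity_lossless
    (ε : ℝ) (hε : 0 < ε) (M N : ℤ)
    (k θ : ℤ → ℝ → ℝ) (A : ℤ → ℝ → ℂ) (C m : ℤ → ℤ → ℝ → ℝ)
    (hk : ∀ l ∈ Finset.Icc M N, ∀ R ∈ Set.Ioi (0:ℝ), DifferentiableAt ℝ (k l) R)
    (hkpos : ∀ l ∈ Finset.Icc M N, ∀ R ∈ Set.Ioi (0:ℝ), 0 < k l R)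
    (hA : ∀ l ∈ Finset.Icc M N, ∀ R ∈ Set.Ioi (0:ℝ), DifferentiableAt ℝ (A l) R)
    (hm : ∀ l ∈ Finset.Icc M N, ∀ j ∈ Finset.Icc M N, ∀ R ∈ Set.Ioi (0:ℝ), m l j R = m j l R)
    (hMPE : ∀ l ∈ Finset.Icc M N, ∀ R ∈ Set.Ioi (0:ℝ),
      2 * Complex.I * (k l R : ℂ) * deriv (A l) R
        + Complex.I * ((deriv (k l) R : ℝ) : ℂ) * A l R
        + Complex.I / (R : ℂ) * (k l R : ℂ) * A l R
        + ∑ j ∈ Finset.Icc M N,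
            ((m l j R : ℂ) - Complex.I * (k j R : ℂ) * ((C l j R : ℂ) - (C j l R : ℂ)))
              * A j R
              * Complex.exp (Complex.I * ((θ j R : ℂ) - (θ l R : ℂ)) / (ε : ℂ)) = 0) :
    ∀ R ∈ Set.Ioi (0:ℝ),
      (∑ l ∈ Finset.Icc M N,
        (deriv (fun s => k l s * ‖A l s‖ ^ 2) R
          + (1 / R) * k l R * ‖A l R‖ ^ 2))
      + ∑ l ∈ Finset.Icc M N, ∑ j ∈ Finset.Icc M N,
          (k l R - k j R) * C l j R *
            (A j R * (starRingEnd ℂ) (A l R)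
              * Complex.exp (Complex.I * ((θ j R : ℂ) - (θ l R : ℂ)) / (ε : ℂ))).re = 0 := by
  intro R hR
  -- notation
  set Z : ℤ → ℤ → ℂ := Zc ε θ A R with hZ
  have hZapp : ∀ l j : ℤ, A j R * (starRingEnd ℂ) (A l R)
      * Complex.exp (Complex.I * ((θ j R : ℂ) - (θ l R : ℂ)) / (ε : ℂ)) = Z l j := by
    intro l j; rw [hZ]; rfl
  -- per-mode identity
  have claim1 : ∀ l ∈ Finset.Icc M N,
      deriv (fun s => k l s * ‖A l s‖ ^ 2) R
        + (1 / R) * k l R * ‖A l R‖ ^ 2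
        + ∑ j ∈ Finset.Icc M N,
            (m l j R * (Z l j).im - k j R * (C l j R - C j l R) * (Z l j).re) = 0 := by
    intro l hl
    have hA' := (hA l hl R hR).hasDerivAt
    have hre : HasDerivAt (fun s => (A l s).re) ((deriv (A l) R).re) R :=
      Complex.reCLM.hasFDerivAt.comp_hasDerivAt R hA'
    have him : HasDerivAt (fun s => (A l s).im) ((deriv (A l) R).im) R :=
      Complex.imCLM.hasFDerivAt.comp_hasDerivAt R hA'
    have hk' := (hk l hl R hR).hasDerivAt
    have hsq := (hre.mul hre).add (him.mul him)
    have hfun : (fun s => k l s * ‖A l s‖ ^ 2)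
        = fun s => k l s * ((A l s).re * (A l s).re + (A l s).im * (A l s).im) := by
      funext s; rw [Complex.sq_norm, Complex.normSq_apply]
    have hderiv : deriv (fun s => k l s * ‖A l s‖ ^ 2) R
        = deriv (k l) R * ((A l R).re * (A l R).re + (A l R).im * (A l R).im)
          + k l R * (((deriv (A l) R).re * (A l R).re + (A l R).re * (deriv (A l) R).re)
            + ((deriv (A l) R).im * (A l R).im + (A l R).im * (deriv (A l) R).im)) := by
      rw [hfun]; exact (hk'.mul hsq).deriv
    -- multiply MPE by conj(A l R)
    have e2 : (2 * Complex.I * (k l R : ℂ) * deriv (A l) R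
          + Complex.I * ((deriv (k l) R : ℝ) : ℂ) * A l R
          + Complex.I * ((R⁻¹ : ℝ) : ℂ) * (k l R : ℂ) * A l R) * (starRingEnd ℂ) (A l R)
        + ∑ j ∈ Finset.Icc M N,
            ((m l j R : ℂ) - Complex.I * (k j R : ℂ) * ((C l j R : ℂ) - (C j l R : ℂ)))
              * Z l j = 0 := by
      have e := hMPE l hl R hR
      have := congrArg (fun z : ℂ => z * (starRingEnd ℂ) (A l R)) e
      simp only [zero_mul] at this
      rw [add_mul, Finset.sum_mul] at this
      rw [show (Complex.I * ((R⁻¹ : ℝ) : ℂ) : ℂ) = Complex.I / (R : ℂ) by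
        rw [Complex.ofReal_inv]; ring]
      rw [← this]
      congr 1
      apply Finset.sum_congr rfl
      intro j hj
      rw [← hZapp]
      ring
    have e3 := congrArg Complex.im e2
    simp only [Complex.add_im, Complex.zero_im, Complex.im_sum] at e3
    have esum : ∑ j ∈ Finset.Icc M N,
        ((((m l j R : ℂ) - Complex.I * (k j R : ℂ) * ((C l j R : ℂ) - (C j l R : ℂ)))
          * Z l j).im)
        = ∑ j ∈ Finset.Icc M N,
            (m l j R * (Z l j).im - k j R * (C l j R - C j l R) * (Z l j).re) := by
      apply Finset.sum_congr rfl
      intro j hj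
      simp [Complex.mul_im, Complex.mul_re, Complex.sub_re, Complex.sub_im]
      ring
    rw [esum] at e3
    rw [hderiv, Complex.sq_norm, Complex.normSq_apply]
    simp only [Complex.add_re, Complex.add_im, Complex.mul_im, Complex.mul_re,
      Complex.I_re, Complex.I_im,
      Complex.ofReal_re, Complex.ofReal_im, Complex.conj_re, Complex.conj_im,
      Complex.re_ofNat, Complex.im_ofNat] at e3
    linear_combination e3
  -- antisymmetric double sum vanishes
  have hWanti : ∀ l ∈ Finset.Icc M N, ∀ j ∈ Finset.Icc M N,
      (m j l R * (Z j l).im + k l R * C l j R * (Z j l).re - k j R * C j l R * (Z j l).re)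
      = -(m l j R * (Z l j).im + k j R * C j l R * (Z l j).re - k l R * C l j R * (Z l j).re) := by
    intro l hl j hj
    have h1 : Z j l = (starRingEnd ℂ) (Z l j) := by rw [hZ]; exact Zc_symm ε θ A R l j
    rw [h1, Complex.conj_im, Complex.conj_re, hm l hl j hj R hR]
    ring
  have hW : ∑ l ∈ Finset.Icc M N, ∑ j ∈ Finset.Icc M N,
      (m l j R * (Z l j).im + k j R * C j l R * (Z l j).re - k l R * C l j R * (Z l j).re)
      = 0 := by
    have hc := Finset.sum_comm (s := Finset.Icc M N) (t := Finset.Icc M N)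
      (f := fun l j => (m l j R * (Z l j).im + k j R * C j l R * (Z l j).re
        - k l R * C l j R * (Z l j).re))
    have hneg : ∑ j ∈ Finset.Icc M N, ∑ l ∈ Finset.Icc M N,
        (m l j R * (Z l j).im + k j R * C j l R * (Z l j).re - k l R * C l j R * (Z l j).re)
        = -∑ l ∈ Finset.Icc M N, ∑ j ∈ Finset.Icc M N,
            (m l j R * (Z l j).im + k j R * C j l R * (Z l j).re
              - k l R * C l j R * (Z l j).re) := by
      rw [← Finset.sum_neg_distrib]
      apply Finset.sum_congr rfl
      intro j hj
      rw [← Finset.sum_neg_distrib]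
      apply Finset.sum_congr rfl
      intro l hl
      have := hWanti l hl j hj
      linarith [this]
    rw [hneg] at hc
    linarith [hc]
  -- assemble
  have hsum1 : (∑ l ∈ Finset.Icc M N,
      (deriv (fun s => k l s * ‖A l s‖ ^ 2) R
        + (1 / R) * k l R * ‖A l R‖ ^ 2))
      + ∑ l ∈ Finset.Icc M N, ∑ j ∈ Finset.Icc M N,
          (m l j R * (Z l j).im - k j R * (C l j R - C j l R) * (Z l j).re) = 0 := by
    rw [← Finset.sum_add_distrib]
    exact Finset.sum_eq_zero claim1
  have hgoal : ∑ l ∈ Finset.Icc M N, ∑ j ∈ Finset.Icc M N,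
      (k l R - k j R) * C l j R * (Z l j).re
      = ∑ l ∈ Finset.Icc M N, ∑ j ∈ Finset.Icc M N,
          (m l j R * (Z l j).im - k j R * (C l j R - C j l R) * (Z l j).re) := by
    have hsplit : ∀ l j : ℤ,
        (m l j R * (Z l j).im - k j R * (C l j R - C j l R) * (Z l j).re)
        - (k l R - k j R) * C l j R * (Z l j).re
        = (m l j R * (Z l j).im + k j R * C j l R * (Z l j).re
            - k l R * C l j R * (Z l j).re) := by
      intro l j; ring
    have : ∑ l ∈ Finset.Icc M N, ∑ j ∈ Finset.Icc M N,
        ((m l j R * (Z l j).im - k j R * (C l j R - C j l R) * (Z l j).re)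
          - (k l R - k j R) * C l j R * (Z l j).re) = 0 := by
      calc _ = ∑ l ∈ Finset.Icc M N, ∑ j ∈ Finset.Icc M N,
          (m l j R * (Z l j).im + k j R * C j l R * (Z l j).re
            - k l R * C l j R * (Z l j).re) := by
            apply Finset.sum_congr rfl; intro l _; apply Finset.sum_congr rfl; intro j _
            exact hsplit l j
        _ = 0 := hW
    rw [Finset.sum_congr rfl (fun l _ => Finset.sum_sub_distrib _ _),
      Finset.sum_sub_distrib _ _] at this
    linarith [this]
  simp only [hZapp]
  linarith [hsum1, hgoal]
end

section
/- Let H > 0, ε > 0 and a finite index range {M,…,N} be given, and let γ : (0,∞) × [−H,0] → ℝ be continuous. For each index j let φ_j : (0,∞) × [−H,0] → ℝ be continuous and differentiable in its first argument with continuous partial derivative φ_{jR}; assume ∫_{−H}^{0} γ(R,z) φ_j(R,z) φ_l(R,z) dz = δ_{jl} for all R > 0 and define C_{lj}(R) = ∫_{−H}^{0} γ(R,z) φ_{lR}(R,z) φ_j(R,z) dz; assume each C_{lj} is differentiable. Let k_l : (0,∞) → ℝ be differentiable with k_l(R) > 0, let θ_l : (0,∞) → ℝ be differentiable with θ_l'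 = k_l, let m_{lj} : (0,∞) → ℝ satisfy m_{lj} = m_{jl}, and let A_l : (0,∞) → ℂ be twice differentiable and satisfy the coupled-mode system (MPE) with coefficients α_{lj}(R) = m_{lj}(R) − i k_j(R)( C_{lj}(R) − C_{jl}(R) ). Set P(r,z) = Σ_{j=M}^{N} A_j(εr) φ_j(εr,z) e^{i θ_j(εr)/ε} and F(r) = r ∫_{−H}^{0} γ(εr,z) Im( P_r(r,z) conj(P(r,z)) ) dz. Then for every r > 0, writing R = εr and evaluating all slow-variable functions at R, one has the exact identity (1/r) F'(r) = ε² · G(r), where G(r) = (1/R)[ Σ_{l,j} C_{lj} Im( A_l conj(A_j) e^{i(θ_l−θ_j)/ε} ) + Σ_l Im( A_l' conj(A_l) ) ] + Σ_{l,j} [ C_{lj}' Im( A_l conj(A_j) e^{i(θ_l−θ_j)/ε} ) + C_{lj} Im( ( A_l' conj(A_j) + A_l conj(A_j') ) e^{i(θ_l−θ_j)/ε} ) ] + Σ_l Im( A_l'' conj(A_l) ). In particular, the divergence of the depth-integrated acoustic energy flux of the coupled-mode ansatz is O(ε²): its first-order part in ε vanishes identically. -/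
open Set Finset

private lemma aux_comp_linC {f : ℝ → ℂ} {f' : ℂ} {ε r : ℝ} (hf : HasDerivAt f f' (ε*r)) :
    HasDerivAt (fun s => f (ε*s)) ((ε:ℂ) * f') r := by
  have h1 : HasDerivAt (fun s : ℝ => ε * s) ε r := by simpa using (hasDerivAt_id r).const_mul ε
  simpa [Complex.real_smul, mul_comm, Function.comp_def] using hf.scomp r h1

private lemma aux_comp_linR {f : ℝ → ℝ} {f' ε r : ℝ} (hf : HasDerivAt f f' (ε*r)) :
    HasDerivAt (fun s => f (ε*s)) (ε * f') r := by
  have h1 : HasDerivAt (fun s : ℝ => ε * s) ε r := by simpa using (hasDerivAt_id r).const_mul ε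
  simpa [mul_comm, Function.comp_def] using hf.comp r h1

private lemma aux_im {f : ℝ → ℂ} {f' : ℂ} {x : ℝ} (hf : HasDerivAt f f' x) :
    HasDerivAt (fun x => (f x).im) f'.im x :=
  Complex.imCLM.hasFDerivAt.comp_hasDerivAt x hf

private lemma aux_re {f : ℝ → ℂ} {f' : ℂ} {x : ℝ} (hf : HasDerivAt f f' x) :
    HasDerivAt (fun x => (f x).re) f'.re x :=
  Complex.reCLM.hasFDerivAt.comp_hasDerivAt x hf

private lemma aux_conj {f : ℝ → ℂ} {f' : ℂ} {x : ℝ} (hf : HasDerivAt f f' x) :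
    HasDerivAt (fun x => (starRingEnd ℂ) (f x)) ((starRingEnd ℂ) f') x := hf.star

private lemma aux_exp {ε r : ℝ} (hε : ε ≠ 0) {θ : ℝ → ℝ} {kv : ℝ}
    (hθ : HasDerivAt θ kv (ε*r)) :
    HasDerivAt (fun s => Complex.exp (Complex.I * (θ (ε*s) : ℂ) / ε))
      (Complex.exp (Complex.I * (θ (ε*r) : ℂ) / ε) * (Complex.I * kv)) r := by
  have hε' : (ε:ℂ) ≠ 0 := by exact_mod_cast hε
  have h2 : HasDerivAt (fun s => θ (ε*s)) (ε * kv) r := aux_comp_linR hθ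
  have h3 : HasDerivAt (fun s => Complex.I * (θ (ε*s) : ℂ) / ε)
      (Complex.I * ((ε*kv : ℝ):ℂ) / ε) r := (h2.ofReal_comp.const_mul Complex.I).div_const _
  convert h3.cexp using 1
  push_cast
  field_simp

private lemma aux_expE {ε r : ℝ} (hε : ε ≠ 0) {θ1 θ2 : ℝ → ℝ} {k1 k2 : ℝ}
    (h1 : HasDerivAt θ1 k1 (ε*r)) (h2 : HasDerivAt θ2 k2 (ε*r)) :
    HasDerivAt (fun s => Complex.exp (Complex.I * ((θ1 (ε*s) : ℂ) - (θ2 (ε*s) : ℂ)) / ε))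
      (Complex.exp (Complex.I * ((θ1 (ε*r) : ℂ) - (θ2 (ε*r) : ℂ)) / ε)
        * (Complex.I * ((k1:ℂ) - k2))) r := by
  have hε' : (ε:ℂ) ≠ 0 := by exact_mod_cast hε
  have h1' : HasDerivAt (fun s => θ1 (ε*s) - θ2 (ε*s)) (ε*k1 - ε*k2) r :=
    (aux_comp_linR h1).sub (aux_comp_linR h2)
  have h3 : HasDerivAt (fun s => Complex.I * ((θ1 (ε*s) - θ2 (ε*s) : ℝ):ℂ) / ε)
      (Complex.I * ((ε*k1 - ε*k2 : ℝ):ℂ) / ε) r :=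
    (h1'.ofReal_comp.const_mul Complex.I).div_const _
  have h4 := h3.cexp
  have he : ∀ s : ℝ, Complex.I * ((θ1 (ε*s) - θ2 (ε*s) : ℝ):ℂ) / ε
      = Complex.I * ((θ1 (ε*s) : ℂ) - (θ2 (ε*s) : ℂ)) / ε := by intro s; push_cast; ring
  simp only [he] at h4
  convert h4 using 1
  push_cast
  field_simp

private lemma aux_expconj (ε a b : ℝ) :
    Complex.exp (Complex.I*(a:ℂ)/ε) * (starRingEnd ℂ) (Complex.exp (Complex.I*(b:ℂ)/ε))
    = Complex.exp (Complex.I*((a:ℂ)-(b:ℂ))/ε) := by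
  rw [← Complex.exp_conj, ← Complex.exp_add]
  congr 1
  rw [map_div₀, map_mul]
  simp [Complex.conj_I, Complex.conj_ofReal]
  ring

private lemma aux_conjE (ε a b : ℝ) :
    (starRingEnd ℂ) (Complex.exp (Complex.I*((a:ℂ)-(b:ℂ))/ε))
    = Complex.exp (Complex.I*((b:ℂ)-(a:ℂ))/ε) := by
  rw [← Complex.exp_conj]
  congr 1
  rw [map_div₀, map_mul]
  simp [Complex.conj_I, Complex.conj_ofReal]
  ring

private lemma aux_antisym (S : Finset ℤ) (f : ℤ → ℤ → ℝ)
    (hf : ∀ l ∈ S, ∀ j ∈ S, f l j = - f j l) :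
    ∑ l ∈ S, ∑ j ∈ S, f l j = 0 := by
  have h := Finset.sum_comm (s := S) (t := S) (f := fun l j => f l j)
  have h2 : ∑ l ∈ S, ∑ j ∈ S, f l j = - ∑ l ∈ S, ∑ j ∈ S, f l j := by
    nth_rewrite 1 [h]
    rw [← Finset.sum_neg_distrib]
    refine Finset.sum_congr rfl fun j hj => ?_
    rw [← Finset.sum_neg_distrib]
    exact Finset.sum_congr rfl fun l hl => hf l hl j hj
  linarith

private lemma aux_im2 (e kk : ℝ) (a b c : ℂ) :
    ((((e:ℂ) * a + Complex.I * (kk:ℂ) * b) * c)).im = e*(a*c).im + kk*(b*c).re := by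
  simp [Complex.add_im, Complex.mul_im, Complex.mul_re]
  ring

private lemma aux_integral_sum2 {s t : Finset ℤ} {f : ℤ → ℤ → ℝ → ℝ} {a b : ℝ}
    (h : ∀ i ∈ s, ∀ j ∈ t, IntervalIntegrable (f i j) MeasureTheory.volume a b) :
    ∫ x in a..b, ∑ i ∈ s, ∑ j ∈ t, f i j x
      = ∑ i ∈ s, ∑ j ∈ t, ∫ x in a..b, f i j x := by
  refine (intervalIntegral.integral_finset_sum (f := fun i x => ∑ j ∈ t, f i j x)
      (fun i hi => by
        have h2 := IntervalIntegrable.sum t (fun j hj => h i hi j hj)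
        have h3 : (∑ j ∈ t, f i j) = fun x => ∑ j ∈ t, f i j x := by
          funext x; simp
        rwa [h3] at h2)).trans ?_
  exact Finset.sum_congr rfl fun i hi =>
    intervalIntegral.integral_finset_sum (fun j hj => h i hi j hj)

private lemma aux_Wconj (ε : ℝ) (u v : ℂ) (a b : ℝ) :
    (starRingEnd ℂ) (u * (starRingEnd ℂ) v * Complex.exp (Complex.I * ((a:ℂ)-(b:ℂ))/ε))
    = v * (starRingEnd ℂ) u * Complex.exp (Complex.I * ((b:ℂ)-(a:ℂ))/ε) := by
  rw [map_mul, map_mul, Complex.conj_conj, aux_conjE]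
  ring

private lemma aux_mpe1 (c : ℝ) (a b : ℂ) :
    (2 * Complex.I * (c:ℂ) * a * b).im = 2*c*(a*b).re := by
  simp [Complex.mul_im, Complex.mul_re]
  ring

private lemma aux_mpe2 (c : ℝ) (a b : ℂ) :
    (Complex.I * (c:ℂ) * a * b).im = c*(a*b).re := by
  simp [Complex.mul_im, Complex.mul_re]
  ring

private lemma aux_mpe3 {RR : ℝ} (hRR : RR ≠ 0) (c : ℝ) (a b : ℂ) :
    (Complex.I / (RR:ℂ) * (c:ℂ) * a * b).im = (1/RR)*(c*(a*b).re) := by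
  have h : (RR:ℂ) ≠ 0 := by exact_mod_cast hRR
  rw [show Complex.I / (RR:ℂ) * (c:ℂ) * a * b
      = Complex.I * ((c/RR : ℝ):ℂ) * a * b from by push_cast; ring,
    aux_mpe2]
  ring

private lemma aux_alpha (mm kk c1 c2 : ℝ) (w : ℂ) :
    (((mm:ℂ) - Complex.I*(kk:ℂ)*((c1:ℂ)-(c2:ℂ))) * (starRingEnd ℂ) w).im
    = -(mm * w.im) - kk*(c1-c2)*w.re := by
  simp [Complex.sub_im, Complex.mul_im, Complex.mul_re, Complex.sub_re,
    Complex.conj_re, Complex.conj_im]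
  ring


set_option maxHeartbeats 1000000 in
/-- **The divergence of the depth-integrated energy flux of the coupled-mode ansatz
is exactly of order `ε²`.**  For amplitudes solving the coupled-mode system (MPE)
with the lossless coefficients `α_{lj} = m_{lj} − i k_j (C_{lj} − C_{jl})`, the flux
`F(r) = r ∫_{−H}^0 γ Im(P_r conj P) dz` of the WKB ansatz
`P = ∑_j A_j(εr) φ_j(εr,z) e^{iθ_j(εr)/ε}` satisfies the exact identity
`(1/r) F'(r) = ε² G(r)`; in particular its first-order part in `ε` vanishes. -/
theorem flux_divergence_is_order_eps_sq
    (H ε : ℝ) (hH : 0 < H) (hε : 0 < ε) (M N : ℤ)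
    (γ : ℝ → ℝ → ℝ)
    (hγ : ContinuousOn (fun p : ℝ × ℝ => γ p.1 p.2) (Set.Ioi 0 ×ˢ Set.Icc (-H) 0))
    (φ φR : ℤ → ℝ → ℝ → ℝ)
    (hφcont : ∀ j ∈ Finset.Icc M N,
      ContinuousOn (fun p : ℝ × ℝ => φ j p.1 p.2) (Set.Ioi 0 ×ˢ Set.Icc (-H) 0))
    (hφR : ∀ j ∈ Finset.Icc M N, ∀ R ∈ Set.Ioi (0:ℝ), ∀ z ∈ Set.Icc (-H) 0,
      HasDerivAt (fun s => φ j s z) (φR j R z) R)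
    (hφRcont : ∀ j ∈ Finset.Icc M N,
      ContinuousOn (fun p : ℝ × ℝ => φR j p.1 p.2) (Set.Ioi 0 ×ˢ Set.Icc (-H) 0))
    (hortho : ∀ j ∈ Finset.Icc M N, ∀ l ∈ Finset.Icc M N, ∀ R ∈ Set.Ioi (0:ℝ),
      (∫ z in (-H)..0, γ R z * φ j R z * φ l R z) = if j = l then 1 else 0)
    (C : ℤ → ℤ → ℝ → ℝ)
    (hC : ∀ l ∈ Finset.Icc M N, ∀ j ∈ Finset.Icc M N, ∀ R ∈ Set.Ioi (0:ℝ),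
      C l j R = ∫ z in (-H)..0, γ R z * φR l R z * φ j R z)
    (hCdiff : ∀ l ∈ Finset.Icc M N, ∀ j ∈ Finset.Icc M N, ∀ R ∈ Set.Ioi (0:ℝ),
      DifferentiableAt ℝ (C l j) R)
    (k θ : ℤ → ℝ → ℝ) (m : ℤ → ℤ → ℝ → ℝ) (A : ℤ → ℝ → ℂ)
    (hk : ∀ l ∈ Finset.Icc M N, ∀ R ∈ Set.Ioi (0:ℝ), DifferentiableAt ℝ (k l) R)
    (hkpos : ∀ l ∈ Finset.Icc M N, ∀ R ∈ Set.Ioi (0:ℝ), 0 < k l R)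
    (hθ : ∀ l ∈ Finset.Icc M N, ∀ R ∈ Set.Ioi (0:ℝ), HasDerivAt (θ l) (k l R) R)
    (hm : ∀ l ∈ Finset.Icc M N, ∀ j ∈ Finset.Icc M N, ∀ R ∈ Set.Ioi (0:ℝ), m l j R = m j l R)
    (hA : ∀ l ∈ Finset.Icc M N, ∀ R ∈ Set.Ioi (0:ℝ), DifferentiableAt ℝ (A l) R)
    (hA' : ∀ l ∈ Finset.Icc M N, ∀ R ∈ Set.Ioi (0:ℝ), DifferentiableAt ℝ (deriv (A l)) R)
    (hMPE : ∀ l ∈ Finset.Icc M N, ∀ R ∈ Set.Ioi (0:ℝ),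
      2 * Complex.I * (k l R : ℂ) * deriv (A l) R
        + Complex.I * ((deriv (k l) R : ℝ) : ℂ) * A l R
        + Complex.I / (R : ℂ) * (k l R : ℂ) * A l R
        + ∑ j ∈ Finset.Icc M N,
            ((m l j R : ℂ) - Complex.I * (k j R : ℂ) * ((C l j R : ℂ) - (C j l R : ℂ)))
              * A j R
              * Complex.exp (Complex.I * ((θ j R : ℂ) - (θ l R : ℂ)) / (ε : ℂ)) = 0)
    (P : ℝ → ℝ → ℂ)
    (hP : ∀ r z, P r z = ∑ j ∈ Finset.Icc M N,
      A j (ε * r) * (φ j (ε * r) z : ℂ)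
        * Complex.exp (Complex.I * (θ j (ε * r) : ℂ) / (ε : ℂ)))
    (F : ℝ → ℝ)
    (hF : ∀ r, F r = r * ∫ z in (-H)..0,
      γ (ε * r) z * (deriv (fun s => P s z) r * (starRingEnd ℂ) (P r z)).im) :
    ∀ r ∈ Set.Ioi (0:ℝ),
      (1 / r) * deriv F r
      = ε ^ 2 *
        ((1 / (ε * r)) *
          ((∑ l ∈ Finset.Icc M N, ∑ j ∈ Finset.Icc M N,
              C l j (ε * r) * (A l (ε * r) * (starRingEnd ℂ) (A j (ε * r))
                * Complex.exp (Complex.I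
                    * ((θ l (ε * r) : ℂ) - (θ j (ε * r) : ℂ)) / (ε : ℂ))).im)
            + ∑ l ∈ Finset.Icc M N,
                (deriv (A l) (ε * r) * (starRingEnd ℂ) (A l (ε * r))).im)
        + (∑ l ∈ Finset.Icc M N, ∑ j ∈ Finset.Icc M N,
            (deriv (C l j) (ε * r) *
              (A l (ε * r) * (starRingEnd ℂ) (A j (ε * r))
                * Complex.exp (Complex.I
                    * ((θ l (ε * r) : ℂ) - (θ j (ε * r) : ℂ)) / (ε : ℂ))).im
            + C l j (ε * r) *
              ((deriv (A l) (ε * r) * (starRingEnd ℂ) (A j (ε * r))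
                  + A l (ε * r) * (starRingEnd ℂ) (deriv (A j) (ε * r)))
                * Complex.exp (Complex.I
                    * ((θ l (ε * r) : ℂ) - (θ j (ε * r) : ℂ)) / (ε : ℂ))).im))
        + ∑ l ∈ Finset.Icc M N,
            (deriv (deriv (A l)) (ε * r) * (starRingEnd ℂ) (A l (ε * r))).im) := by
  have hε0 : ε ≠ 0 := ne_of_gt hε
  have hflux : ∀ r ∈ Set.Ioi (0:ℝ), F r = r *
      ((∑ l ∈ Finset.Icc M N, k l (ε*r) * (A l (ε*r) * (starRingEnd ℂ) (A l (ε*r))).re)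
       + ε * ((∑ l ∈ Finset.Icc M N, (deriv (A l) (ε*r) * (starRingEnd ℂ) (A l (ε*r))).im)
         + ∑ l ∈ Finset.Icc M N, ∑ j ∈ Finset.Icc M N, C l j (ε*r) *
            (A l (ε*r) * (starRingEnd ℂ) (A j (ε*r)) *
              Complex.exp (Complex.I * ((θ l (ε*r):ℂ) - (θ j (ε*r):ℂ)) / ε)).im)) := by
    intro r hr
    have hR : ε * r ∈ Set.Ioi (0:ℝ) := mul_pos hε hr
    have hHle : (-H) ≤ (0:ℝ) := by linarith
    -- continuity-in-z helper
    have hcz : ∀ (g : ℝ → ℝ → ℝ), ContinuousOn (fun p : ℝ × ℝ => g p.1 p.2)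
        (Set.Ioi 0 ×ˢ Set.Icc (-H) 0) → ContinuousOn (fun z => g (ε*r) z) (Set.Icc (-H) 0) := by
      intro g hg
      have heq : (fun z => g (ε*r) z) = (fun p : ℝ × ℝ => g p.1 p.2) ∘ (fun z => (ε*r, z)) := rfl
      rw [heq]
      exact hg.comp (Continuous.continuousOn (continuous_const.prodMk continuous_id)) (fun z hz => ⟨hR, hz⟩)
    -- derivative of P in r, for z in the depth interval
    have hDz : ∀ z ∈ Set.Icc (-H) 0, HasDerivAt (fun s => P s z)
        (∑ j ∈ Finset.Icc M N,
          (((ε:ℂ) * deriv (A j) (ε*r) + Complex.I * (k j (ε*r) : ℂ) * A j (ε*r)) * (φ j (ε*r) z : ℂ)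
            + (ε:ℂ) * A j (ε*r) * (φR j (ε*r) z : ℂ))
          * Complex.exp (Complex.I * (θ j (ε*r) : ℂ) / ε)) r := by
      intro z hz
      have hPs : (fun s => P s z) = fun s => ∑ j ∈ Finset.Icc M N,
          A j (ε*s) * (φ j (ε*s) z : ℂ) * Complex.exp (Complex.I * (θ j (ε*s) : ℂ) / ε) := by
        funext s; exact hP s z
      rw [hPs]
      refine HasDerivAt.fun_sum fun j hj => ?_
      have hAj : HasDerivAt (fun s => A j (ε*s)) ((ε:ℂ) * deriv (A j) (ε*r)) r :=
        aux_comp_linC (hA j hj _ hR).hasDerivAt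
      have hφj : HasDerivAt (fun s => ((φ j (ε*s) z : ℝ):ℂ)) (((ε * φR j (ε*r) z : ℝ)):ℂ) r :=
        (aux_comp_linR (hφR j hj _ hR z hz)).ofReal_comp
      have hej := aux_exp hε0 (hθ j hj _ hR)
      have hprod := (hAj.fun_mul hφj).fun_mul hej
      refine hprod.congr_deriv ?_
      push_cast
      ring
    -- pointwise expansion of the integrand
    have hInt1 : ∀ z ∈ Set.Icc (-H) 0,
        γ (ε*r) z * (deriv (fun s => P s z) r * (starRingEnd ℂ) (P r z)).im
        = ∑ j ∈ Finset.Icc M N, ∑ l ∈ Finset.Icc M N,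
            (γ (ε*r) z * φ j (ε*r) z * φ l (ε*r) z *
              (((ε:ℂ) * deriv (A j) (ε*r) + Complex.I * (k j (ε*r):ℂ) * A j (ε*r))
                * (starRingEnd ℂ) (A l (ε*r))
                * Complex.exp (Complex.I * ((θ j (ε*r):ℂ) - (θ l (ε*r):ℂ)) / ε)).im
            + γ (ε*r) z * φR j (ε*r) z * φ l (ε*r) z *
              (((ε:ℂ) * A j (ε*r) * (starRingEnd ℂ) (A l (ε*r))
                * Complex.exp (Complex.I * ((θ j (ε*r):ℂ) - (θ l (ε*r):ℂ)) / ε)).im)) := by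
      intro z hz
      rw [(hDz z hz).deriv, hP r z, map_sum, Finset.sum_mul_sum]
      rw [Complex.im_sum, Finset.mul_sum]
      refine Finset.sum_congr rfl fun j hj => ?_
      rw [Complex.im_sum, Finset.mul_sum]
      refine Finset.sum_congr rfl fun l hl => ?_
      have hw : (((ε:ℂ) * deriv (A j) (ε*r) + Complex.I * (k j (ε*r):ℂ) * A j (ε*r))
              * (φ j (ε*r) z : ℂ) + (ε:ℂ) * A j (ε*r) * (φR j (ε*r) z : ℂ))
            * Complex.exp (Complex.I * (θ j (ε*r) : ℂ) / ε)
            * (starRingEnd ℂ) (A l (ε*r) * (φ l (ε*r) z : ℂ)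
                * Complex.exp (Complex.I * (θ l (ε*r) : ℂ) / ε))
          = ((φ j (ε*r) z * φ l (ε*r) z : ℝ) : ℂ) *
              (((ε:ℂ) * deriv (A j) (ε*r) + Complex.I * (k j (ε*r):ℂ) * A j (ε*r))
                * (starRingEnd ℂ) (A l (ε*r))
                * Complex.exp (Complex.I * ((θ j (ε*r):ℂ) - (θ l (ε*r):ℂ)) / ε))
            + ((φR j (ε*r) z * φ l (ε*r) z : ℝ) : ℂ) *
              ((ε:ℂ) * A j (ε*r) * (starRingEnd ℂ) (A l (ε*r))
                * Complex.exp (Complex.I * ((θ j (ε*r):ℂ) - (θ l (ε*r):ℂ)) / ε)) := by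
        rw [map_mul, map_mul, Complex.conj_ofReal]
        push_cast
        linear_combination ((((ε:ℂ) * deriv (A j) (ε*r)
            + Complex.I * (k j (ε*r):ℂ) * A j (ε*r)) * (φ j (ε*r) z : ℂ)
            + (ε:ℂ) * A j (ε*r) * (φR j (ε*r) z : ℂ)) * (starRingEnd ℂ) (A l (ε*r))
            * ((φ l (ε*r) z : ℝ) : ℂ)) * aux_expconj ε (θ j (ε*r)) (θ l (ε*r))
      rw [hw, Complex.add_im]
      simp only [Complex.mul_im, Complex.ofReal_re, Complex.ofReal_im, zero_mul, add_zero,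
        mul_zero]
      ring
    have huIcc : Set.uIcc (-H) (0:ℝ) = Set.Icc (-H) 0 := Set.uIcc_of_le hHle
    have hIntegrable : ∀ (c : ℝ) (j : ℤ), j ∈ Finset.Icc M N → ∀ l ∈ Finset.Icc M N,
        IntervalIntegrable (fun z => γ (ε*r) z * φ j (ε*r) z * φ l (ε*r) z * c)
          MeasureTheory.volume (-H) 0 := by
      intro c j hj l hl
      apply ContinuousOn.intervalIntegrable
      rw [huIcc]
      exact (((hcz γ hγ).mul (hcz (φ j) (hφcont j hj))).mul
        (hcz (φ l) (hφcont l hl))).mul continuousOn_const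
    have hIntegrableR : ∀ (c : ℝ) (j : ℤ), j ∈ Finset.Icc M N → ∀ l ∈ Finset.Icc M N,
        IntervalIntegrable (fun z => γ (ε*r) z * φR j (ε*r) z * φ l (ε*r) z * c)
          MeasureTheory.volume (-H) 0 := by
      intro c j hj l hl
      apply ContinuousOn.intervalIntegrable
      rw [huIcc]
      exact (((hcz γ hγ).mul (hcz (φR j) (hφRcont j hj))).mul
        (hcz (φ l) (hφcont l hl))).mul continuousOn_const
    have hmain : ∀ (u v : ℂ) (j : ℤ), j ∈ Finset.Icc M N → ∀ l ∈ Finset.Icc M N,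
        (∫ z in (-H)..0, (γ (ε*r) z * φ j (ε*r) z * φ l (ε*r) z * u.im
           + γ (ε*r) z * φR j (ε*r) z * φ l (ε*r) z * v.im))
        = (if j = l then 1 else 0) * u.im + C j l (ε*r) * v.im := by
      intro u v j hj l hl
      rw [intervalIntegral.integral_add (hIntegrable u.im j hj l hl)
        (hIntegrableR v.im j hj l hl)]
      rw [intervalIntegral.integral_mul_const, intervalIntegral.integral_mul_const]
      rw [hortho j hj l hl _ hR, ← hC j hj l hl _ hR]
    rw [hF r]
    congr 1
    rw [intervalIntegral.integral_congr (g := fun z =>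
        ∑ j ∈ Finset.Icc M N, ∑ l ∈ Finset.Icc M N,
          (γ (ε*r) z * φ j (ε*r) z * φ l (ε*r) z *
            (((ε:ℂ) * deriv (A j) (ε*r) + Complex.I * (k j (ε*r):ℂ) * A j (ε*r))
              * (starRingEnd ℂ) (A l (ε*r))
              * Complex.exp (Complex.I * ((θ j (ε*r):ℂ) - (θ l (ε*r):ℂ)) / ε)).im
          + γ (ε*r) z * φR j (ε*r) z * φ l (ε*r) z *
            (((ε:ℂ) * A j (ε*r) * (starRingEnd ℂ) (A l (ε*r))
              * Complex.exp (Complex.I * ((θ j (ε*r):ℂ) - (θ l (ε*r):ℂ)) / ε)).im)))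
      (fun z hz => hInt1 z (by rwa [huIcc] at hz))]
    rw [aux_integral_sum2 (fun j hj l hl =>
      (hIntegrable ((((ε:ℂ) * deriv (A j) (ε*r) + Complex.I * (k j (ε*r):ℂ) * A j (ε*r))
              * (starRingEnd ℂ) (A l (ε*r))
              * Complex.exp (Complex.I * ((θ j (ε*r):ℂ) - (θ l (ε*r):ℂ)) / ε)).im) j hj l hl).add
        (hIntegrableR (((ε:ℂ) * A j (ε*r) * (starRingEnd ℂ) (A l (ε*r))
              * Complex.exp (Complex.I * ((θ j (ε*r):ℂ) - (θ l (ε*r):ℂ)) / ε)).im) j hj l hl))]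
    rw [Finset.sum_congr rfl (fun j hj => Finset.sum_congr rfl (fun l hl =>
      hmain _ _ j hj l hl))]
    -- now finish the algebra
    have himε : ∀ w : ℂ, ((ε:ℂ)*w).im = ε * w.im := fun w => by
      simp [Complex.mul_im]
    have hUjj : ∀ j ∈ Finset.Icc M N,
        (((ε:ℂ) * deriv (A j) (ε*r) + Complex.I * (k j (ε*r):ℂ) * A j (ε*r))
          * (starRingEnd ℂ) (A j (ε*r))
          * Complex.exp (Complex.I * ((θ j (ε*r):ℂ) - (θ j (ε*r):ℂ)) / ε)).im
        = ε * (deriv (A j) (ε*r) * (starRingEnd ℂ) (A j (ε*r))).im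
          + k j (ε*r) * (A j (ε*r) * (starRingEnd ℂ) (A j (ε*r))).re := by
      intro j hj
      rw [sub_self, mul_zero, zero_div, Complex.exp_zero, mul_one]
      exact aux_im2 ε (k j (ε*r)) _ _ _
    have hrow : ∀ j ∈ Finset.Icc M N,
        (∑ l ∈ Finset.Icc M N,
          ((if j = l then (1:ℝ) else 0) *
            (((ε:ℂ) * deriv (A j) (ε*r) + Complex.I * (k j (ε*r):ℂ) * A j (ε*r))
              * (starRingEnd ℂ) (A l (ε*r))
              * Complex.exp (Complex.I * ((θ j (ε*r):ℂ) - (θ l (ε*r):ℂ)) / ε)).im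
          + C j l (ε*r) *
            ((ε:ℂ) * A j (ε*r) * (starRingEnd ℂ) (A l (ε*r))
              * Complex.exp (Complex.I * ((θ j (ε*r):ℂ) - (θ l (ε*r):ℂ)) / ε)).im))
        = (ε * (deriv (A j) (ε*r) * (starRingEnd ℂ) (A j (ε*r))).im
            + k j (ε*r) * (A j (ε*r) * (starRingEnd ℂ) (A j (ε*r))).re)
          + ε * ∑ l ∈ Finset.Icc M N, C j l (ε*r) *
              (A j (ε*r) * (starRingEnd ℂ) (A l (ε*r))
                * Complex.exp (Complex.I * ((θ j (ε*r):ℂ) - (θ l (ε*r):ℂ)) / ε)).im := by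
      intro j hj
      rw [Finset.sum_add_distrib]
      congr 1
      · simp only [ite_mul, one_mul, zero_mul]
        rw [Finset.sum_ite_eq, if_pos hj]
        exact hUjj j hj
      · rw [Finset.mul_sum]
        refine Finset.sum_congr rfl fun l hl => ?_
        rw [show (ε:ℂ) * A j (ε*r) * (starRingEnd ℂ) (A l (ε*r))
              * Complex.exp (Complex.I * ((θ j (ε*r):ℂ) - (θ l (ε*r):ℂ)) / ε)
            = (ε:ℂ) * (A j (ε*r) * (starRingEnd ℂ) (A l (ε*r))
              * Complex.exp (Complex.I * ((θ j (ε*r):ℂ) - (θ l (ε*r):ℂ)) / ε)) from by ring,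
          himε]
        ring
    rw [Finset.sum_congr rfl hrow, Finset.sum_add_distrib, Finset.sum_add_distrib,
      ← Finset.mul_sum, ← Finset.mul_sum]
    ring
  intro r hr
  have hR : ε * r ∈ Set.Ioi (0:ℝ) := mul_pos hε hr
  have hrne : r ≠ 0 := ne_of_gt hr
  have hRne : ε * r ≠ 0 := ne_of_gt hR
  -- basic derivative facts for the amplitudes
  have hAd : ∀ l ∈ Finset.Icc M N,
      HasDerivAt (fun r' => A l (ε*r')) ((ε:ℂ) * deriv (A l) (ε*r)) r :=
    fun l hl => aux_comp_linC (hA l hl _ hR).hasDerivAt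
  have hAcd : ∀ l ∈ Finset.Icc M N, HasDerivAt (fun r' => (starRingEnd ℂ) (A l (ε*r')))
      ((starRingEnd ℂ) ((ε:ℂ) * deriv (A l) (ε*r))) r := fun l hl => aux_conj (hAd l hl)
  have hA2d : ∀ l ∈ Finset.Icc M N, HasDerivAt (fun r' => deriv (A l) (ε*r'))
      ((ε:ℂ) * deriv (deriv (A l)) (ε*r)) r := fun l hl => aux_comp_linC (hA' l hl _ hR).hasDerivAt
  -- derivative of the leading part
  have hgpart : HasDerivAt (fun r' => ∑ l ∈ Finset.Icc M N,
        k l (ε*r') * (A l (ε*r') * (starRingEnd ℂ) (A l (ε*r'))).re)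
      (∑ l ∈ Finset.Icc M N, ε * (deriv (k l) (ε*r) * (A l (ε*r) * (starRingEnd ℂ) (A l (ε*r))).re
        + 2 * k l (ε*r) * (deriv (A l) (ε*r) * (starRingEnd ℂ) (A l (ε*r))).re)) r := by
    refine HasDerivAt.fun_sum fun l hl => ?_
    have h1 := (aux_comp_linR (hk l hl _ hR).hasDerivAt).fun_mul
      (aux_re ((hAd l hl).fun_mul (hAcd l hl)))
    refine h1.congr_deriv ?_
    simp [Complex.mul_re, Complex.add_re, Complex.mul_im, map_mul, Complex.conj_ofReal,
      Complex.conj_re, Complex.conj_im, Complex.ofReal_re, Complex.ofReal_im]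
    ring
  have hbpart : HasDerivAt (fun r' => ∑ l ∈ Finset.Icc M N,
        (deriv (A l) (ε*r') * (starRingEnd ℂ) (A l (ε*r'))).im)
      (∑ l ∈ Finset.Icc M N,
        ε * (deriv (deriv (A l)) (ε*r) * (starRingEnd ℂ) (A l (ε*r))).im) r := by
    refine HasDerivAt.fun_sum fun l hl => ?_
    have h1 := aux_im ((hA2d l hl).fun_mul (hAcd l hl))
    refine h1.congr_deriv ?_
    simp [Complex.mul_re, Complex.add_im, Complex.mul_im, map_mul, Complex.conj_ofReal,
      Complex.conj_re, Complex.conj_im, Complex.ofReal_re, Complex.ofReal_im]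
    ring
  have hcpart : HasDerivAt (fun r' => ∑ l ∈ Finset.Icc M N, ∑ j ∈ Finset.Icc M N,
        C l j (ε*r') * (A l (ε*r') * (starRingEnd ℂ) (A j (ε*r')) *
          Complex.exp (Complex.I * ((θ l (ε*r'):ℂ) - (θ j (ε*r'):ℂ)) / ε)).im)
      (∑ l ∈ Finset.Icc M N, ∑ j ∈ Finset.Icc M N,
        (ε * (deriv (C l j) (ε*r) * (A l (ε*r) * (starRingEnd ℂ) (A j (ε*r)) *
            Complex.exp (Complex.I * ((θ l (ε*r):ℂ) - (θ j (ε*r):ℂ)) / ε)).im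
          + C l j (ε*r) * ((deriv (A l) (ε*r) * (starRingEnd ℂ) (A j (ε*r))
              + A l (ε*r) * (starRingEnd ℂ) (deriv (A j) (ε*r))) *
            Complex.exp (Complex.I * ((θ l (ε*r):ℂ) - (θ j (ε*r):ℂ)) / ε)).im)
        + C l j (ε*r) * ((k l (ε*r) - k j (ε*r)) * (A l (ε*r) * (starRingEnd ℂ) (A j (ε*r)) *
            Complex.exp (Complex.I * ((θ l (ε*r):ℂ) - (θ j (ε*r):ℂ)) / ε)).re))) r := by
    refine HasDerivAt.fun_sum fun l hl => HasDerivAt.fun_sum fun j hj => ?_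
    have h1 := (aux_comp_linR (hCdiff l hl j hj _ hR).hasDerivAt).fun_mul
      (aux_im (((hAd l hl).fun_mul (aux_conj (hAd j hj))).fun_mul
        (aux_expE hε0 (hθ l hl _ hR) (hθ j hj _ hR))))
    refine h1.congr_deriv ?_
    simp [Complex.mul_re, Complex.add_im, Complex.add_re, Complex.mul_im, map_mul,
      Complex.conj_ofReal, Complex.sub_re, Complex.sub_im,
      Complex.conj_re, Complex.conj_im, Complex.ofReal_re, Complex.ofReal_im,
      Complex.I_re, Complex.I_im]
    ring
  -- normalise the derivative values
  simp only [← Finset.mul_sum] at hgpart hbpart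
  have hcval : (∑ l ∈ Finset.Icc M N, ∑ j ∈ Finset.Icc M N,
        (ε * (deriv (C l j) (ε*r) * (A l (ε*r) * (starRingEnd ℂ) (A j (ε*r)) *
            Complex.exp (Complex.I * ((θ l (ε*r):ℂ) - (θ j (ε*r):ℂ)) / ε)).im
          + C l j (ε*r) * ((deriv (A l) (ε*r) * (starRingEnd ℂ) (A j (ε*r))
              + A l (ε*r) * (starRingEnd ℂ) (deriv (A j) (ε*r))) *
            Complex.exp (Complex.I * ((θ l (ε*r):ℂ) - (θ j (ε*r):ℂ)) / ε)).im)
        + C l j (ε*r) * ((k l (ε*r) - k j (ε*r)) * (A l (ε*r) * (starRingEnd ℂ) (A j (ε*r)) *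
            Complex.exp (Complex.I * ((θ l (ε*r):ℂ) - (θ j (ε*r):ℂ)) / ε)).re)))
      = ε * (∑ l ∈ Finset.Icc M N, ∑ j ∈ Finset.Icc M N,
          (deriv (C l j) (ε*r) * (A l (ε*r) * (starRingEnd ℂ) (A j (ε*r)) *
            Complex.exp (Complex.I * ((θ l (ε*r):ℂ) - (θ j (ε*r):ℂ)) / ε)).im
          + C l j (ε*r) * ((deriv (A l) (ε*r) * (starRingEnd ℂ) (A j (ε*r))
              + A l (ε*r) * (starRingEnd ℂ) (deriv (A j) (ε*r))) *
            Complex.exp (Complex.I * ((θ l (ε*r):ℂ) - (θ j (ε*r):ℂ)) / ε)).im))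
        + ∑ l ∈ Finset.Icc M N, ∑ j ∈ Finset.Icc M N,
            C l j (ε*r) * ((k l (ε*r) - k j (ε*r)) * (A l (ε*r) * (starRingEnd ℂ) (A j (ε*r)) *
              Complex.exp (Complex.I * ((θ l (ε*r):ℂ) - (θ j (ε*r):ℂ)) / ε)).re) := by
    simp only [Finset.sum_add_distrib, ← Finset.mul_sum]
  rw [hcval] at hcpart
  have hB := hgpart.add ((hbpart.add hcpart).const_mul ε)
  have hrB := (hasDerivAt_id r).mul hB
  have hFev : F =ᶠ[nhds r] (fun r' => r' *
      ((∑ l ∈ Finset.Icc M N, k l (ε*r') * (A l (ε*r') * (starRingEnd ℂ) (A l (ε*r'))).re)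
       + ε * ((∑ l ∈ Finset.Icc M N, (deriv (A l) (ε*r') * (starRingEnd ℂ) (A l (ε*r'))).im)
         + ∑ l ∈ Finset.Icc M N, ∑ j ∈ Finset.Icc M N, C l j (ε*r') *
            (A l (ε*r') * (starRingEnd ℂ) (A j (ε*r')) *
              Complex.exp (Complex.I * ((θ l (ε*r'):ℂ) - (θ j (ε*r'):ℂ)) / ε)).im))) := by
    filter_upwards [isOpen_Ioi.mem_nhds hr] with x hx using hflux x hx
  have hdF := hFev.deriv_eq.trans hrB.deriv
  -- the MPE energy identity
  have hMPEl : ∀ l ∈ Finset.Icc M N,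
      (deriv (k l) (ε*r) * (A l (ε*r) * (starRingEnd ℂ) (A l (ε*r))).re
        + 2 * k l (ε*r) * (deriv (A l) (ε*r) * (starRingEnd ℂ) (A l (ε*r))).re)
      + (1/(ε*r)) * (k l (ε*r) * (A l (ε*r) * (starRingEnd ℂ) (A l (ε*r))).re)
      + ∑ j ∈ Finset.Icc M N,
          (-(m l j (ε*r) * (A l (ε*r) * (starRingEnd ℂ) (A j (ε*r)) *
              Complex.exp (Complex.I * ((θ l (ε*r):ℂ) - (θ j (ε*r):ℂ)) / ε)).im)
           - k j (ε*r) * (C l j (ε*r) - C j l (ε*r)) * (A l (ε*r) * (starRingEnd ℂ) (A j (ε*r)) *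
              Complex.exp (Complex.I * ((θ l (ε*r):ℂ) - (θ j (ε*r):ℂ)) / ε)).re) = 0 := by
    intro l hl
    have e0 := hMPE l hl _ hR
    have e1 : ((2 * Complex.I * (k l (ε*r) : ℂ) * deriv (A l) (ε*r)
        + Complex.I * ((deriv (k l) (ε*r) : ℝ) : ℂ) * A l (ε*r)
        + Complex.I / ((ε*r : ℝ) : ℂ) * (k l (ε*r) : ℂ) * A l (ε*r)
        + ∑ j ∈ Finset.Icc M N,
            ((m l j (ε*r) : ℂ) - Complex.I * (k j (ε*r) : ℂ) * ((C l j (ε*r) : ℂ) - (C j l (ε*r) : ℂ)))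
              * A j (ε*r)
              * Complex.exp (Complex.I * ((θ j (ε*r) : ℂ) - (θ l (ε*r) : ℂ)) / (ε : ℂ)))
        * (starRingEnd ℂ) (A l (ε*r))).im = 0 := by
      rw [e0, zero_mul]
      simp
    rw [add_mul, add_mul, add_mul, Finset.sum_mul] at e1
    simp only [Complex.add_im] at e1
    rw [Complex.im_sum] at e1
    rw [aux_mpe1, aux_mpe2, aux_mpe3 hRne] at e1
    have e2 : ∑ j ∈ Finset.Icc M N,
        (((m l j (ε*r) : ℂ) - Complex.I * (k j (ε*r) : ℂ) * ((C l j (ε*r) : ℂ) - (C j l (ε*r) : ℂ)))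
              * A j (ε*r)
              * Complex.exp (Complex.I * ((θ j (ε*r) : ℂ) - (θ l (ε*r) : ℂ)) / (ε : ℂ))
              * (starRingEnd ℂ) (A l (ε*r))).im
      = ∑ j ∈ Finset.Icc M N,
          (-(m l j (ε*r) * (A l (ε*r) * (starRingEnd ℂ) (A j (ε*r)) *
              Complex.exp (Complex.I * ((θ l (ε*r):ℂ) - (θ j (ε*r):ℂ)) / ε)).im)
           - k j (ε*r) * (C l j (ε*r) - C j l (ε*r)) * (A l (ε*r) * (starRingEnd ℂ) (A j (ε*r)) *
              Complex.exp (Complex.I * ((θ l (ε*r):ℂ) - (θ j (ε*r):ℂ)) / ε)).re) := by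
      refine Finset.sum_congr rfl fun j hj => ?_
      show (((m l j (ε*r) : ℂ) - Complex.I * (k j (ε*r) : ℂ) * ((C l j (ε*r) : ℂ) - (C j l (ε*r) : ℂ)))
              * A j (ε*r)
              * Complex.exp (Complex.I * ((θ j (ε*r) : ℂ) - (θ l (ε*r) : ℂ)) / (ε : ℂ))
              * (starRingEnd ℂ) (A l (ε*r))).im
          = -(m l j (ε*r) * (A l (ε*r) * (starRingEnd ℂ) (A j (ε*r)) *
              Complex.exp (Complex.I * ((θ l (ε*r):ℂ) - (θ j (ε*r):ℂ)) / ε)).im)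
           - k j (ε*r) * (C l j (ε*r) - C j l (ε*r)) * (A l (ε*r) * (starRingEnd ℂ) (A j (ε*r)) *
              Complex.exp (Complex.I * ((θ l (ε*r):ℂ) - (θ j (ε*r):ℂ)) / ε)).re
      rw [show ((m l j (ε*r) : ℂ) - Complex.I * (k j (ε*r) : ℂ) * ((C l j (ε*r) : ℂ) - (C j l (ε*r) : ℂ)))
              * A j (ε*r)
              * Complex.exp (Complex.I * ((θ j (ε*r) : ℂ) - (θ l (ε*r) : ℂ)) / (ε : ℂ))
              * (starRingEnd ℂ) (A l (ε*r))
          = ((m l j (ε*r) : ℂ) - Complex.I * (k j (ε*r) : ℂ) * ((C l j (ε*r) : ℂ) - (C j l (ε*r) : ℂ)))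
              * (A j (ε*r) * (starRingEnd ℂ) (A l (ε*r))
                * Complex.exp (Complex.I * ((θ j (ε*r) : ℂ) - (θ l (ε*r) : ℂ)) / (ε : ℂ))) from by ring]
      rw [show A j (ε*r) * (starRingEnd ℂ) (A l (ε*r))
                * Complex.exp (Complex.I * ((θ j (ε*r) : ℂ) - (θ l (ε*r) : ℂ)) / (ε : ℂ))
          = (starRingEnd ℂ) (A l (ε*r) * (starRingEnd ℂ) (A j (ε*r)) *
              Complex.exp (Complex.I * ((θ l (ε*r):ℂ) - (θ j (ε*r):ℂ)) / ε)) from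
            (aux_Wconj ε (A l (ε*r)) (A j (ε*r)) (θ l (ε*r)) (θ j (ε*r))).symm]
      exact aux_alpha _ _ _ _ _
    rw [e2] at e1
    linarith [e1]
  have e4 := Finset.sum_eq_zero hMPEl
  rw [Finset.sum_add_distrib, Finset.sum_add_distrib, ← Finset.mul_sum] at e4
  -- the m–part vanishes and the C–part is the commutator term
  have hWconj : ∀ a b : ℤ, (starRingEnd ℂ) (A a (ε*r) * (starRingEnd ℂ) (A b (ε*r)) *
        Complex.exp (Complex.I * ((θ a (ε*r):ℂ) - (θ b (ε*r):ℂ)) / ε))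
      = A b (ε*r) * (starRingEnd ℂ) (A a (ε*r)) *
        Complex.exp (Complex.I * ((θ b (ε*r):ℂ) - (θ a (ε*r):ℂ)) / ε) :=
    fun a b => aux_Wconj ε (A a (ε*r)) (A b (ε*r)) (θ a (ε*r)) (θ b (ε*r))
  have hWim : ∀ a b : ℤ, (A b (ε*r) * (starRingEnd ℂ) (A a (ε*r)) *
        Complex.exp (Complex.I * ((θ b (ε*r):ℂ) - (θ a (ε*r):ℂ)) / ε)).im
      = -(A a (ε*r) * (starRingEnd ℂ) (A b (ε*r)) *
        Complex.exp (Complex.I * ((θ a (ε*r):ℂ) - (θ b (ε*r):ℂ)) / ε)).im := by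
    intro a b
    rw [← hWconj a b, Complex.conj_im]
  have hWre : ∀ a b : ℤ, (A b (ε*r) * (starRingEnd ℂ) (A a (ε*r)) *
        Complex.exp (Complex.I * ((θ b (ε*r):ℂ) - (θ a (ε*r):ℂ)) / ε)).re
      = (A a (ε*r) * (starRingEnd ℂ) (A b (ε*r)) *
        Complex.exp (Complex.I * ((θ a (ε*r):ℂ) - (θ b (ε*r):ℂ)) / ε)).re := by
    intro a b
    rw [← hWconj a b, Complex.conj_re]
  have hsplit2 : ∑ l ∈ Finset.Icc M N, ∑ j ∈ Finset.Icc M N,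
        (-(m l j (ε*r) * (A l (ε*r) * (starRingEnd ℂ) (A j (ε*r)) *
            Complex.exp (Complex.I * ((θ l (ε*r):ℂ) - (θ j (ε*r):ℂ)) / ε)).im)
         - k j (ε*r) * (C l j (ε*r) - C j l (ε*r)) * (A l (ε*r) * (starRingEnd ℂ) (A j (ε*r)) *
            Complex.exp (Complex.I * ((θ l (ε*r):ℂ) - (θ j (ε*r):ℂ)) / ε)).re)
      = ∑ l ∈ Finset.Icc M N, ∑ j ∈ Finset.Icc M N,
          C l j (ε*r) * ((k l (ε*r) - k j (ε*r)) * (A l (ε*r) * (starRingEnd ℂ) (A j (ε*r)) *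
            Complex.exp (Complex.I * ((θ l (ε*r):ℂ) - (θ j (ε*r):ℂ)) / ε)).re) := by
    have hm0 : ∑ l ∈ Finset.Icc M N, ∑ j ∈ Finset.Icc M N,
        (-(m l j (ε*r) * (A l (ε*r) * (starRingEnd ℂ) (A j (ε*r)) *
            Complex.exp (Complex.I * ((θ l (ε*r):ℂ) - (θ j (ε*r):ℂ)) / ε)).im)) = 0 := by
      refine aux_antisym _ _ fun l hl j hj => ?_
      rw [hm l hl j hj _ hR, hWim l j]
      ring
    have h6 : ∑ l ∈ Finset.Icc M N, ∑ j ∈ Finset.Icc M N,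
          k j (ε*r) * C j l (ε*r) * (A l (ε*r) * (starRingEnd ℂ) (A j (ε*r)) *
            Complex.exp (Complex.I * ((θ l (ε*r):ℂ) - (θ j (ε*r):ℂ)) / ε)).re
        = ∑ l ∈ Finset.Icc M N, ∑ j ∈ Finset.Icc M N,
          k l (ε*r) * C l j (ε*r) * (A l (ε*r) * (starRingEnd ℂ) (A j (ε*r)) *
            Complex.exp (Complex.I * ((θ l (ε*r):ℂ) - (θ j (ε*r):ℂ)) / ε)).re := by
      rw [Finset.sum_comm]
      exact Finset.sum_congr rfl fun a ha => Finset.sum_congr rfl fun b hb => by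
        rw [hWre a b]
    have h5 : ∑ l ∈ Finset.Icc M N, ∑ j ∈ Finset.Icc M N,
        (-(m l j (ε*r) * (A l (ε*r) * (starRingEnd ℂ) (A j (ε*r)) *
            Complex.exp (Complex.I * ((θ l (ε*r):ℂ) - (θ j (ε*r):ℂ)) / ε)).im)
         - k j (ε*r) * (C l j (ε*r) - C j l (ε*r)) * (A l (ε*r) * (starRingEnd ℂ) (A j (ε*r)) *
            Complex.exp (Complex.I * ((θ l (ε*r):ℂ) - (θ j (ε*r):ℂ)) / ε)).re)
      = (∑ l ∈ Finset.Icc M N, ∑ j ∈ Finset.Icc M N,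
        (-(m l j (ε*r) * (A l (ε*r) * (starRingEnd ℂ) (A j (ε*r)) *
            Complex.exp (Complex.I * ((θ l (ε*r):ℂ) - (θ j (ε*r):ℂ)) / ε)).im)))
        + ((∑ l ∈ Finset.Icc M N, ∑ j ∈ Finset.Icc M N,
          k l (ε*r) * C l j (ε*r) * (A l (ε*r) * (starRingEnd ℂ) (A j (ε*r)) *
            Complex.exp (Complex.I * ((θ l (ε*r):ℂ) - (θ j (ε*r):ℂ)) / ε)).re)
          - ∑ l ∈ Finset.Icc M N, ∑ j ∈ Finset.Icc M N,
          k j (ε*r) * C l j (ε*r) * (A l (ε*r) * (starRingEnd ℂ) (A j (ε*r)) *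
            Complex.exp (Complex.I * ((θ l (ε*r):ℂ) - (θ j (ε*r):ℂ)) / ε)).re)
          - ((∑ l ∈ Finset.Icc M N, ∑ j ∈ Finset.Icc M N,
          k l (ε*r) * C l j (ε*r) * (A l (ε*r) * (starRingEnd ℂ) (A j (ε*r)) *
            Complex.exp (Complex.I * ((θ l (ε*r):ℂ) - (θ j (ε*r):ℂ)) / ε)).re)
          - ∑ l ∈ Finset.Icc M N, ∑ j ∈ Finset.Icc M N,
          k j (ε*r) * C j l (ε*r) * (A l (ε*r) * (starRingEnd ℂ) (A j (ε*r)) *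
            Complex.exp (Complex.I * ((θ l (ε*r):ℂ) - (θ j (ε*r):ℂ)) / ε)).re) := by
      simp only [← Finset.sum_add_distrib, ← Finset.sum_sub_distrib]
      exact Finset.sum_congr rfl fun a ha => Finset.sum_congr rfl fun b hb => by ring
    rw [h5, hm0, h6, zero_add, sub_self, sub_zero, ← Finset.sum_sub_distrib]
    refine Finset.sum_congr rfl fun a ha => ?_
    rw [← Finset.sum_sub_distrib]
    exact Finset.sum_congr rfl fun b hb => by ring
  rw [hsplit2] at e4
  -- final assembly
  rw [mul_comm (1/r) (deriv F r), hdF]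
  field_simp at e4 ⊢
  simp only [Pi.add_apply, id_eq]
  linear_combination e4
end
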